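/- Let G be a graph such that no longest cycle of G is a dominating cycle, and let C be a longest cycle of G chosen so that the maximum order μ(C) of a component of G − C is as small as possible, and subject to that, the number ω(C) of components of G − C of order μ(C) is as small as possible. Let H be a component of G − C with |H| = μ(C). If S is an independent set of G with S ⊆ V(C) and no vertex of S has a neighbor outside C, then there is no longest cycle D of G with V(D) ⊇ V(C) \ S and V(D) ∩ V(H) ≠ ∅. -/

import Mathlib

open SimpleGraph

variable {V : Type*} [Fintype V] [DecidableEq V]

/-- `p 0, p 1, ..., p (n-1)` is a path of order `n` in `G`. -/
def IsPathOn (G : SimpleGraph V) (n : ℕ) (p : ℕ → V) : Prop :=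
  (∀ i j, i < n → j < n → p i = p j → i = j) ∧
  (∀ i, i + 1 < n → G.Adj (p i) (p (i + 1)))

/-- An induced path of order `n` in `G`. -/
def IsInducedPathOn (G : SimpleGraph V) (n : ℕ) (p : ℕ → V) : Prop :=
  IsPathOn G n p ∧ ∀ i j, i < n → j < n → G.Adj (p i) (p j) → (i + 1 = j ∨ j + 1 = i)

/-- `G` contains no induced path on 5 vertices. -/
def P5Free (G : SimpleGraph V) : Prop := ¬ ∃ p : ℕ → V, IsInducedPathOn G 5 p

/-- `G` contains no induced `K₄` minus an edge. -/
def K4mFree (G : SimpleGraph V) : Prop :=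
  ¬ ∃ a b c d : V, a ≠ b ∧ a ≠ c ∧ a ≠ d ∧ b ≠ c ∧ b ≠ d ∧ c ≠ d ∧
    G.Adj a b ∧ G.Adj a c ∧ G.Adj a d ∧ G.Adj b c ∧ G.Adj b d ∧ ¬ G.Adj c d

/-- `G` contains no induced `W*` (two triangles `abc`, `def` joined by the edge `cd`). -/
def WStarFree (G : SimpleGraph V) : Prop :=
  ¬ ∃ a b c d e f : V, List.Nodup [a, b, c, d, e, f] ∧
    G.Adj a b ∧ G.Adj b c ∧ G.Adj a c ∧ G.Adj d e ∧ G.Adj e f ∧ G.Adj d f ∧ G.Adj c d ∧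
    ¬ G.Adj a d ∧ ¬ G.Adj a e ∧ ¬ G.Adj a f ∧
    ¬ G.Adj b d ∧ ¬ G.Adj b e ∧ ¬ G.Adj b f ∧ ¬ G.Adj c e ∧ ¬ G.Adj c f

/-- `G` contains no induced paw (triangle `abc` with pendant edge `cd`). -/
def Z1Free (G : SimpleGraph V) : Prop :=
  ¬ ∃ a b c d : V, List.Nodup [a, b, c, d] ∧
    G.Adj a b ∧ G.Adj b c ∧ G.Adj a c ∧ G.Adj c d ∧ ¬ G.Adj a d ∧ ¬ G.Adj b d

/-- An (oriented) cycle of length `n` in `G`, as an injective map `ZMod n → V`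
with consecutive vertices adjacent. -/
def IsCycleOn (G : SimpleGraph V) (n : ℕ) (c : ZMod n → V) : Prop :=
  3 ≤ n ∧ Function.Injective c ∧ ∀ i, G.Adj (c i) (c (i + 1))

/-- A longest cycle of `G`. -/
def IsLongestCycle (G : SimpleGraph V) (n : ℕ) (c : ZMod n → V) : Prop :=
  IsCycleOn G n c ∧ ∀ (m : ℕ) (d : ZMod m → V), IsCycleOn G m d → m ≤ n

/-- A dominating cycle: every edge of `G` is incident with a vertex of the cycle. -/
def DominatingCycle (G : SimpleGraph V) (n : ℕ) (c : ZMod n → V) : Prop :=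
  IsCycleOn G n c ∧ ∀ u v : V, G.Adj u v → u ∈ Set.range c ∨ v ∈ Set.range c

/-- `H` is (the vertex set of) a connected component of `G - R`. -/
def IsCompOff (G : SimpleGraph V) (R : Set V) (H : Set V) : Prop :=
  H.Nonempty ∧ Disjoint H R ∧ (G.induce H).Connected ∧
  ∀ u v : V, u ∈ H → v ∉ H → v ∉ R → ¬ G.Adj u v

/-- `μ`: the maximum order of a component of `G - R`. -/
noncomputable def muC (G : SimpleGraph V) (R : Set V) : ℕ :=
  sSup {k | ∃ H : Set V, IsCompOff G R H ∧ H.ncard = k}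

/-- `ω`: the number of components of `G - R` of maximum order. -/
noncomputable def omegaC (G : SimpleGraph V) (R : Set V) : ℕ :=
  {H : Set V | IsCompOff G R H ∧ H.ncard = muC G R}.ncard

/-- `G` is 2-connected: at least 3 vertices, connected, and removing any
vertex leaves it connected. -/
def TwoConnected (G : SimpleGraph V) : Prop :=
  3 ≤ Fintype.card V ∧ G.Connected ∧
  ∀ v : V, (G.induce ({v}ᶜ : Set V)).Connected

/-- The set of indices of `ZMod n` encountered going from `s` to `t` in the
positive direction (including both `s` and `t`). -/
def seg (n : ℕ) (s t : ZMod n) : Set (ZMod n) :=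
  {x | ∃ k : ℕ, x = s + (k : ZMod n) ∧ ∀ m : ℕ, m < k → s + (m : ZMod n) ≠ t}

/-- `G` is complete multipartite: the vertices partition into classes of an
equivalence relation which are independent, with all edges between classes. -/
def CompleteMultipartite (G : SimpleGraph V) : Prop :=
  ∃ r : V → V → Prop, Equivalence r ∧ ∀ u v : V, u ≠ v → (G.Adj u v ↔ ¬ r u v)

/-- A `C`-path (for `R = V(C)`): a path of order at least 2 whose ends lie in
`R` and whose internal vertices avoid `R`. -/
def IsCPath (G : SimpleGraph V) (R : Set V) (m : ℕ) (p : ℕ → V) : Prop :=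
  2 ≤ m ∧ IsPathOn G m p ∧ p 0 ∈ R ∧ p (m - 1) ∈ R ∧
  ∀ i, 0 < i → i < m - 1 → p i ∉ R


section Helpers
variable {G : SimpleGraph V}

omit [Fintype V] [DecidableEq V] in
lemma proj_reach {s : Set V} {a b : ↥s} (h : (G.induce s).Reachable a b) :
    ∃ w : G.Walk a.1 b.1, ∀ x ∈ w.support, x ∈ s := by
  obtain ⟨w⟩ := h
  induction w with
  | nil => exact ⟨Walk.nil, by simp⟩
  | @cons u v w h p ih =>
    obtain ⟨q, hq⟩ := ih
    exact ⟨Walk.cons h q, by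
      intro x hx
      rcases List.mem_cons.1 (show x ∈ (u : V) :: q.support from hx) with h1 | h1
      · exact h1 ▸ u.2
      · exact hq x h1⟩

omit [Fintype V] [DecidableEq V] in
lemma lift_reach {s : Set V} {a b : V} (w : G.Walk a b)
    (hs : ∀ x ∈ w.support, x ∈ s) (ha : a ∈ s) (hb : b ∈ s) :
    (G.induce s).Reachable ⟨a, ha⟩ ⟨b, hb⟩ := by
  induction w with
  | nil => rfl
  | @cons u v w h p ih =>
    have hv : v ∈ s := hs v (by simp)
    have hadj : (G.induce s).Adj ⟨u, ha⟩ ⟨v, hv⟩ := h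
    exact hadj.reachable.trans (ih (fun x hx => hs x (by simp [hx])) hv hb)

/-- The component of `G - R` containing `u`, as a set of vertices. -/
def compOf (G : SimpleGraph V) (R : Set V) (u : V) : Set V :=
  {v | ∃ w : G.Walk u v, ∀ x ∈ w.support, x ∉ R}

lemma compOf_self {R : Set V} {u : V} (hu : u ∉ R) : u ∈ compOf G R u :=
  ⟨Walk.nil, by simpa using hu⟩

lemma compOf_notin {R : Set V} {u v : V} (hv : v ∈ compOf G R u) : v ∉ R := by
  obtain ⟨w, hw⟩ := hv
  exact hw v w.end_mem_support

lemma compOf_support {R : Set V} {u v : V} (w : G.Walk u v)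
    (hw : ∀ x ∈ w.support, x ∉ R) : ∀ x ∈ w.support, x ∈ compOf G R u := by
  intro x hx
  exact ⟨w.takeUntil x hx, fun y hy => hw y (w.support_takeUntil_subset hx hy)⟩

lemma compOf_adj {R : Set V} {u v x : V} (hv : v ∈ compOf G R u)
    (hadj : G.Adj v x) (hx : x ∉ R) : x ∈ compOf G R u := by
  obtain ⟨w, hw⟩ := hv
  refine ⟨w.concat hadj, ?_⟩
  intro y hy
  rw [Walk.support_concat, List.mem_append, List.mem_singleton] at hy
  rcases hy with h1 | h1
  · exact hw y h1
  · exact h1 ▸ hx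

lemma compOf_isCompOff {R : Set V} {u : V} (hu : u ∉ R) :
    IsCompOff G R (compOf G R u) := by
  refine ⟨⟨u, compOf_self hu⟩, Set.disjoint_left.2 (fun v hv => compOf_notin hv), ?_, ?_⟩
  · rw [connected_iff]
    refine ⟨?_, ⟨⟨u, compOf_self hu⟩⟩⟩
    · rintro ⟨a, ha⟩ ⟨b, hb⟩
      obtain ⟨w1, hw1⟩ := id ha
      obtain ⟨w2, hw2⟩ := id hb
      have key : ∀ x ∈ (w1.reverse.append w2).support, x ∈ compOf G R u := by
        intro x hx
        rw [Walk.mem_support_append_iff] at hx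
        rcases hx with h1 | h1
        · rw [Walk.support_reverse, List.mem_reverse] at h1
          exact compOf_support w1 hw1 x h1
        · exact compOf_support w2 hw2 x h1
      exact lift_reach (w1.reverse.append w2) key ha hb
  · intro a b haC hbC hbR hadj
    exact hbC (compOf_adj haC hadj hbR)

lemma ncard_le_muC {R K : Set V} (hK : IsCompOff G R K) : K.ncard ≤ muC G R := by
  apply le_csSup
  · refine ⟨Fintype.card V, ?_⟩
    rintro k ⟨A, -, rfl⟩
    calc A.ncard ≤ (Set.univ : Set V).ncard :=
          Set.ncard_le_ncard (Set.subset_univ A) Set.finite_univ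
      _ = Fintype.card V := by rw [Set.ncard_univ, Nat.card_eq_fintype_card]
  · exact ⟨K, hK, rfl⟩

/-- A component (per `IsCompOff`) all of whose vertices avoid `R` is contained
in the `compOf` component of any of its points. -/
lemma comp_subset_compOf {R' R K : Set V} (hK : IsCompOff G R' K)
    (hKR : ∀ x ∈ K, x ∉ R) {u : V} (hu : u ∈ K) : K ⊆ compOf G R u := by
  intro v hv
  obtain ⟨w, hw⟩ := proj_reach (hK.2.2.1.preconnected ⟨u, hu⟩ ⟨v, hv⟩)
  exact ⟨w, fun x hx => hKR x (hw x hx)⟩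

end Helpers

theorem stmt_12 (G : SimpleGraph V)
    (hnd : ∀ (m : ℕ) (d : ZMod m → V), IsLongestCycle G m d → ¬ DominatingCycle G m d)
    (n : ℕ) (c : ZMod n → V) (hc : IsLongestCycle G n c)
    (hmin : ∀ (m : ℕ) (d : ZMod m → V), IsLongestCycle G m d →
      muC G (Set.range c) ≤ muC G (Set.range d) ∧
      (muC G (Set.range c) = muC G (Set.range d) →
        omegaC G (Set.range c) ≤ omegaC G (Set.range d)))
    (H : Set V) (hH : IsCompOff G (Set.range c) H)
    (hHmu : H.ncard = muC G (Set.range c))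
    (S : Set V) (hSC : S ⊆ Set.range c)
    (hSind : ∀ u ∈ S, ∀ v ∈ S, ¬ G.Adj u v)
    (hSout : ∀ u ∈ S, ∀ v ∉ Set.range c, ¬ G.Adj u v) :
    ¬ ∃ (m : ℕ) (d : ZMod m → V), IsLongestCycle G m d ∧
      Set.range c \ S ⊆ Set.range d ∧ (Set.range d ∩ H).Nonempty := by
  rintro ⟨m, d, hD, hsub, hDH⟩
  set Rc := Set.range c with hRc
  set Rd := Set.range d with hRd
  -- Step 1: muC G Rc ≥ 2, since C is not dominating.
  obtain ⟨u0, v0, huv0, hu0, hv0⟩ : ∃ u v, G.Adj u v ∧ u ∉ Rc ∧ v ∉ Rc := by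
    by_contra h
    push_neg at h
    exact hnd n c hc ⟨hc.1, fun u v huv => or_iff_not_imp_left.2 (fun hu => h u v huv hu)⟩
  have hmu2 : 2 ≤ muC G Rc := by
    have hpair : ({u0, v0} : Set V) ⊆ compOf G Rc u0 := by
      rintro x (rfl | rfl)
      · exact compOf_self hu0
      · exact compOf_adj (compOf_self hu0) huv0 hv0
    calc 2 = ({u0, v0} : Set V).ncard := (Set.ncard_pair (G.ne_of_adj huv0)).symm
      _ ≤ (compOf G Rc u0).ncard := Set.ncard_le_ncard hpair (Set.toFinite _)
      _ ≤ muC G Rc := ncard_le_muC (compOf_isCompOff hu0)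
  -- Step 2: vertices of S off D have all their neighbours on D.
  have hSiso : ∀ s ∈ S, ∀ v, G.Adj s v → v ∈ Rd := by
    intro s hs v hadj
    by_cases hvc : v ∈ Rc
    · by_cases hvS : v ∈ S
      · exact absurd hadj (hSind s hs v hvS)
      · exact hsub ⟨hvc, hvS⟩
    · exact absurd hadj (hSout s hs v hvc)
  -- Step 3: any component of G - D with at least 2 vertices avoids Rc.
  have hbig : ∀ K : Set V, IsCompOff G Rd K → 2 ≤ K.ncard → ∀ x ∈ K, x ∉ Rc := by
    intro K hK h2
    have hKS : ∀ x ∈ K, x ∉ S := by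
      intro s hsK hsS
      obtain ⟨b, hb, hbs⟩ := Set.exists_ne_of_one_lt_ncard h2 s
      obtain ⟨w, hw⟩ := proj_reach (hK.2.2.1.preconnected ⟨s, hsK⟩ ⟨b, hb⟩)
      cases w with
      | nil => exact hbs rfl
      | @cons _ x _ hadj p =>
        have hxK : x ∈ K := hw x (by simp)
        have hxRd : x ∉ Rd := Set.disjoint_left.1 hK.2.1 hxK
        exact hxRd (hSiso s hsS x hadj)
    intro x hx hxc
    have hxRd : x ∉ Rd := Set.disjoint_left.1 hK.2.1 hx
    exact hxRd (hsub ⟨hxc, hKS x hx⟩)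
  -- Step 4: muC G Rd ≤ muC G Rc.
  have hmuD_le : muC G Rd ≤ muC G Rc := by
    apply csSup_le'
    rintro k ⟨K, hK, rfl⟩
    by_cases h2 : 2 ≤ K.ncard
    · have hKc := hbig K hK h2
      obtain ⟨u, hu⟩ := hK.1
      calc K.ncard ≤ (compOf G Rc u).ncard :=
            Set.ncard_le_ncard (comp_subset_compOf hK hKc hu) (Set.toFinite _)
        _ ≤ muC G Rc := ncard_le_muC (compOf_isCompOff (hKc u hu))
    · omega
  obtain ⟨hle, homega⟩ := hmin m d hD
  have hmueq : muC G Rc = muC G Rd := le_antisymm hle hmuD_le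
  have hom : omegaC G Rc ≤ omegaC G Rd := homega hmueq
  -- Step 5: every maximum component of G - D is a maximum component of G - C other than H.
  have hAsub : {K : Set V | IsCompOff G Rd K ∧ K.ncard = muC G Rd} ⊆
      {K : Set V | IsCompOff G Rc K ∧ K.ncard = muC G Rc} \ {H} := by
    rintro K ⟨hK, hKn⟩
    have hKmu : K.ncard = muC G Rc := by rw [hKn, ← hmueq]
    have h2 : 2 ≤ K.ncard := hKmu ▸ hmu2
    have hKc := hbig K hK h2
    obtain ⟨u, hu⟩ := hK.1
    have heq : K = compOf G Rc u := by
      refine Set.eq_of_subset_of_ncard_le (comp_subset_compOf hK hKc hu) ?_ (Set.toFinite _)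
      calc (compOf G Rc u).ncard ≤ muC G Rc := ncard_le_muC (compOf_isCompOff (hKc u hu))
        _ = K.ncard := hKmu.symm
    refine ⟨⟨heq ▸ compOf_isCompOff (hKc u hu), hKmu⟩, ?_⟩
    intro hKH
    obtain ⟨x, hxd, hxH⟩ := hDH
    have hxK : x ∈ K := (Set.mem_singleton_iff.1 hKH) ▸ hxH
    exact (Set.disjoint_left.1 hK.2.1 hxK) hxd
  -- Step 6: conclude omegaC G Rd < omegaC G Rc, contradiction.
  have hHin : H ∈ {K : Set V | IsCompOff G Rc K ∧ K.ncard = muC G Rc} := ⟨hH, hHmu⟩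
  have hlt : omegaC G Rd < omegaC G Rc := by
    unfold omegaC
    calc {K : Set V | IsCompOff G Rd K ∧ K.ncard = muC G Rd}.ncard
        ≤ ({K : Set V | IsCompOff G Rc K ∧ K.ncard = muC G Rc} \ {H}).ncard :=
          Set.ncard_le_ncard hAsub (Set.toFinite _)
      _ < {K : Set V | IsCompOff G Rc K ∧ K.ncard = muC G Rc}.ncard :=
          Set.ncard_lt_ncard ⟨Set.diff_subset, fun hss => (hss hHin).2 rfl⟩ (Set.toFinite _)
  exact absurd hom (not_le.2 hlt)
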